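/- Let g ∈ ℂ[X] be a nonzero polynomial that splits into linear factors and let f ∈ ℂ[X]. Then g divides f if and only if for every p ∈ ℂ[X] the rational function p·f/g is a polynomial (has zero total residue at every point), equivalently: g divides f iff Σ_{b∈ℂ} Res_{X=b}(p·f/g) = 0 for all p ∈ ℂ[X]. -/

import Mathlib

open Polynomial

/-- The residue of a rational function `h` at the point `b`: the coefficient of
`(X - b)⁻¹` in the Laurent expansion of `h` about `b`. -/
noncomputable def residue (h : RatFunc ℂ) (b : ℂ) : ℂ :=
  ((RatFunc.laurent b h : LaurentSeries ℂ)).coeff (-1)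

/-- The total residue `Res⁺`: the sum of the residues of `h` over all points of `ℂ`. -/
noncomputable def totalResidue (h : RatFunc ℂ) : ℂ := ∑ᶠ b : ℂ, residue h b

lemma coeff_neg_one_ofPowerSeries (s : PowerSeries ℂ) :
    (HahnSeries.ofPowerSeries ℤ ℂ s).coeff (-1) = 0 := by
  rw [HahnSeries.ofPowerSeries_apply, HahnSeries.embDomain_notin_range]
  rintro ⟨n, hn⟩
  have : (n : ℤ) = -1 := hn
  omega

lemma coe_algebraMap_ratfunc (p : Polynomial ℂ) :
    ((algebraMap (Polynomial ℂ) (RatFunc ℂ) p : RatFunc ℂ) : LaurentSeries ℂ)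
      = HahnSeries.ofPowerSeries ℤ ℂ (p : PowerSeries ℂ) := (RatFunc.coe_coe _).symm

lemma residue_algebraMap (q : Polynomial ℂ) (b : ℂ) :
    residue (algebraMap (Polynomial ℂ) (RatFunc ℂ) q) b = 0 := by
  unfold residue
  rw [RatFunc.laurent_algebraMap, coe_algebraMap_ratfunc]
  exact coeff_neg_one_ofPowerSeries _

lemma coeff_neg_one_div (p q : Polynomial ℂ) (hq : q.coeff 0 ≠ 0) :
    (((algebraMap (Polynomial ℂ) (RatFunc ℂ) p / algebraMap (Polynomial ℂ) (RatFunc ℂ) q :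
      RatFunc ℂ) : LaurentSeries ℂ)).coeff (-1) = 0 := by
  have hq0 : q ≠ 0 := fun h => hq (by simp [h])
  have hu : IsUnit (q : PowerSeries ℂ) := by
    rw [PowerSeries.isUnit_iff_constantCoeff]
    simpa using hq
  obtain ⟨u, hu⟩ := hu
  have hqL : ((algebraMap (Polynomial ℂ) (RatFunc ℂ) q : RatFunc ℂ) : LaurentSeries ℂ) ≠ 0 := by
    rw [coe_algebraMap_ratfunc]
    intro h
    exact (mt Polynomial.coe_eq_zero_iff.mp hq0) (HahnSeries.ofPowerSeries_injective (by rw [h, map_zero]))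
  have key : ((algebraMap (Polynomial ℂ) (RatFunc ℂ) p / algebraMap (Polynomial ℂ) (RatFunc ℂ) q :
      RatFunc ℂ) : LaurentSeries ℂ)
      = HahnSeries.ofPowerSeries ℤ ℂ ((p : PowerSeries ℂ) * ↑u⁻¹) := by
    rw [map_div₀, div_eq_iff hqL, coe_algebraMap_ratfunc, coe_algebraMap_ratfunc,
      ← map_mul]
    congr 1
    rw [mul_assoc, ← hu, Units.inv_mul, mul_one]
  rw [key]
  exact coeff_neg_one_ofPowerSeries _

lemma residue_C_div (c b a : ℂ) :
    residue (algebraMap (Polynomial ℂ) (RatFunc ℂ) (C c) /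
      algebraMap (Polynomial ℂ) (RatFunc ℂ) (X - C b)) a = if a = b then c else 0 := by
  unfold residue
  rw [map_div₀, RatFunc.laurent_algebraMap, RatFunc.laurent_algebraMap, taylor_C]
  have ht : taylor a (X - C b) = X + C (a - b) := by
    rw [map_sub, taylor_X, taylor_C, map_sub]; ring
  rw [ht]
  by_cases h : a = b
  · subst h
    rw [if_pos rfl, sub_self, map_zero, add_zero]
    have hc : ((algebraMap (Polynomial ℂ) (RatFunc ℂ) (C c) : RatFunc ℂ) : LaurentSeries ℂ)
        = HahnSeries.C c := by
      rw [coe_algebraMap_ratfunc, Polynomial.coe_C, HahnSeries.ofPowerSeries_C]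
    have hx : ((algebraMap (Polynomial ℂ) (RatFunc ℂ) X : RatFunc ℂ) : LaurentSeries ℂ)
        = HahnSeries.single 1 1 := by
      rw [coe_algebraMap_ratfunc, Polynomial.coe_X, HahnSeries.ofPowerSeries_X]
    rw [map_div₀, hc, hx]
    have : (HahnSeries.C c : LaurentSeries ℂ) / HahnSeries.single 1 1
        = HahnSeries.single (-1) c := by
      rw [div_eq_iff (HahnSeries.single_ne_zero one_ne_zero), HahnSeries.single_mul_single]
      norm_num [HahnSeries.C_apply]
    rw [this, HahnSeries.coeff_single_same]
  · rw [if_neg h]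
    refine coeff_neg_one_div _ _ ?_
    simp [sub_ne_zero.mpr h]

lemma residue_add (x y : RatFunc ℂ) (a : ℂ) :
    residue (x + y) a = residue x a + residue y a := by
  unfold residue
  rw [map_add, map_add, HahnSeries.coeff_add]

lemma residue_div_X_sub_C (f₁ : Polynomial ℂ) (b a : ℂ) :
    residue (algebraMap (Polynomial ℂ) (RatFunc ℂ) f₁ /
      algebraMap (Polynomial ℂ) (RatFunc ℂ) (X - C b)) a
      = if a = b then f₁.eval b else 0 := by
  have hXb : algebraMap (Polynomial ℂ) (RatFunc ℂ) (X - C b) ≠ 0 :=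
    RatFunc.algebraMap_ne_zero (X_sub_C_ne_zero b)
  have hf : f₁ = C (f₁.eval b) + (X - C b) * (f₁ /ₘ (X - C b)) := by
    conv_lhs => rw [← modByMonic_add_div f₁ (X - C b)]
    rw [modByMonic_X_sub_C_eq_C_eval]
  have hsplit : algebraMap (Polynomial ℂ) (RatFunc ℂ) f₁ /
      algebraMap (Polynomial ℂ) (RatFunc ℂ) (X - C b)
      = algebraMap (Polynomial ℂ) (RatFunc ℂ) (C (f₁.eval b)) /
        algebraMap (Polynomial ℂ) (RatFunc ℂ) (X - C b) +
        algebraMap (Polynomial ℂ) (RatFunc ℂ) (f₁ /ₘ (X - C b)) := by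
    conv_lhs => rw [hf]
    rw [map_add, map_mul, add_div, mul_comm, mul_div_assoc, div_self hXb, mul_one]
  rw [hsplit, residue_add, residue_C_div, residue_algebraMap, add_zero]

lemma totalResidue_div_X_sub_C (f₁ : Polynomial ℂ) (b : ℂ) :
    totalResidue (algebraMap (Polynomial ℂ) (RatFunc ℂ) f₁ /
      algebraMap (Polynomial ℂ) (RatFunc ℂ) (X - C b)) = f₁.eval b := by
  unfold totalResidue
  rw [finsum_eq_single _ b (fun a ha => by rw [residue_div_X_sub_C, if_neg ha]),
    residue_div_X_sub_C, if_pos rfl]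

theorem stmt6 (g f : Polynomial ℂ) (hg : g ≠ 0)
    (hsplits : (g.map (RingHom.id ℂ)).Splits) :
    g ∣ f ↔ ∀ p : Polynomial ℂ,
      totalResidue (algebraMap (Polynomial ℂ) (RatFunc ℂ) (p * f) /
        algebraMap (Polynomial ℂ) (RatFunc ℂ) g) = 0 := by
  classical
  have hg' : algebraMap (Polynomial ℂ) (RatFunc ℂ) g ≠ 0 := RatFunc.algebraMap_ne_zero hg
  constructor
  · rintro ⟨c, rfl⟩ p
    have : algebraMap (Polynomial ℂ) (RatFunc ℂ) (p * (g * c)) /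
        algebraMap (Polynomial ℂ) (RatFunc ℂ) g
        = algebraMap (Polynomial ℂ) (RatFunc ℂ) (p * c) := by
      rw [div_eq_iff hg', ← map_mul]
      ring_nf
    rw [this]
    unfold totalResidue
    exact finsum_eq_zero_of_forall_eq_zero (fun a => residue_algebraMap _ a)
  · intro H
    by_contra hnd
    have hf0 : f ≠ 0 := fun h => hnd (h ▸ dvd_zero g)
    have hroots : ¬ g.roots ≤ f.roots := by
      intro hle
      apply hnd
      have h1 : (g.roots.map fun a => X - C a).prod ∣ f :=
        (Multiset.prod_X_sub_C_dvd_iff_le_roots hf0 _).mpr hle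
      have h2 : g = C g.leadingCoeff * (g.roots.map fun a => X - C a).prod :=
        by rw [map_id] at hsplits; exact hsplits.eq_prod_roots
      rw [h2, mul_comm]
      exact (isUnit_C.mpr (Ne.isUnit (leadingCoeff_ne_zero.mpr hg))).mul_right_dvd.mpr h1
    rw [Multiset.le_iff_count] at hroots
    push_neg at hroots
    obtain ⟨b, hb⟩ := hroots
    rw [count_roots, count_roots] at hb
    set k := rootMultiplicity b f with hk
    set m := rootMultiplicity b g with hm
    have hkm : k < m := hb
    set f₁ := f /ₘ (X - C b) ^ k with hf₁def
    set q := g /ₘ (X - C b) ^ m with hqdef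
    have hf₁ : (X - C b) ^ k * f₁ = f := pow_mul_divByMonic_rootMultiplicity_eq f b
    have hqg : (X - C b) ^ m * q = g := pow_mul_divByMonic_rootMultiplicity_eq g b
    have he : f₁.eval b ≠ 0 := eval_divByMonic_pow_rootMultiplicity_ne_zero b hf0
    set p := q * (X - C b) ^ (m - 1 - k) with hpdef
    have hid : p * f * (X - C b) = f₁ * g := by
      rw [← hf₁, ← hqg, hpdef]
      have hpow : (X - C b) ^ (m - 1 - k) * (X - C b) ^ k * (X - C b) = (X - C b) ^ m := by
        rw [← pow_add, ← pow_succ]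
        congr 1
        omega
      calc q * (X - C b) ^ (m - 1 - k) * ((X - C b) ^ k * f₁) * (X - C b)
          = f₁ * q * ((X - C b) ^ (m - 1 - k) * (X - C b) ^ k * (X - C b)) := by ring
        _ = f₁ * ((X - C b) ^ m * q) := by rw [hpow]; ring
    have hXb : algebraMap (Polynomial ℂ) (RatFunc ℂ) (X - C b) ≠ 0 :=
      RatFunc.algebraMap_ne_zero (X_sub_C_ne_zero b)
    have hrat : algebraMap (Polynomial ℂ) (RatFunc ℂ) (p * f) /
        algebraMap (Polynomial ℂ) (RatFunc ℂ) g
        = algebraMap (Polynomial ℂ) (RatFunc ℂ) f₁ /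
          algebraMap (Polynomial ℂ) (RatFunc ℂ) (X - C b) := by
      rw [div_eq_div_iff hg' hXb, ← map_mul, ← map_mul, hid]
    have := H p
    rw [hrat, totalResidue_div_X_sub_C] at this
    exact he this
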